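/- Let W_c be as above with w_c(β₀) = α(β₀-ξ)coth(α(ξ-β₀)/ε_b). Then the derivative of W_c at β₀ = ξ (in the sense of the continuous extension) equals W_c'(ξ) = (2/ξ)(ε_b - ε_b μ + αξ)(α - 2(μ-1)ξ)/(μ-1). -/

import Mathlib

noncomputable def coth (x : ℝ) : ℝ := Real.cosh x / Real.sinh x

open Filter Topology

lemma aux_sinh : Filter.Tendsto (fun x : ℝ => Real.sinh x / x) (𝓝[≠] 0) (𝓝 1) := by
  have h := Real.hasDerivAt_sinh 0
  rw [hasDerivAt_iff_tendsto_slope] at h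
  simpa [slope_fun_def, Real.sinh_zero, Real.cosh_zero, div_eq_inv_mul] using h

lemma aux_xcoth : Filter.Tendsto (fun x : ℝ => x * Real.cosh x / Real.sinh x) (𝓝[≠] 0) (𝓝 1) := by
  have hc : Filter.Tendsto Real.cosh (𝓝[≠] (0:ℝ)) (𝓝 1) := by
    have := (Real.continuous_cosh.tendsto 0).mono_left (nhdsWithin_le_nhds (s := {(0:ℝ)}ᶜ))
    simpa using this
  have h := hc.div aux_sinh one_ne_zero
  rw [show (1:ℝ)/1 = 1 by norm_num] at h
  refine h.congr' ?_
  filter_upwards [self_mem_nhdsWithin] with x hx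
  have hx0 : x ≠ 0 := hx
  have hs : Real.sinh x ≠ 0 := by simpa [Real.sinh_eq_zero] using hx0
  simp only [Pi.div_apply]
  field_simp

lemma aux_log : Filter.Tendsto (fun y : ℝ => Real.log (1 + y) / y) (𝓝[≠] 0) (𝓝 1) := by
  have h1 : HasDerivAt (fun y : ℝ => Real.log (1 + y)) 1 0 := by
    have h := ((hasDerivAt_id (0:ℝ)).const_add 1).log (by norm_num)
    simpa using h
  rw [hasDerivAt_iff_tendsto_slope] at h1
  simpa [slope_fun_def, div_eq_inv_mul] using h1

private theorem stmt15_aux (α εb ξ μ : ℝ) (hα : 0 < α) (hεb : 0 < εb) (hξ : 0 < ξ) (hμ : 0 < μ)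
    (hμ1 : μ ≠ 1)
    (wc Wc : ℝ → ℝ)
    (hwc : ∀ β₀ : ℝ, wc β₀ = α * (β₀ - ξ) * (Real.cosh (α * (ξ - β₀) / εb) / Real.sinh (α * (ξ - β₀) / εb)))
    (hWc : ∀ β₀ : ℝ, β₀ ≠ ξ →
      Wc β₀ = 4 * (β₀ - ξ) * (εb * μ - α * ξ) + 4 * (β₀ - ξ) * wc β₀ +
        α * εb * Real.log (((2 * ξ - β₀) * (β₀ * α + εb * μ - α * ξ + wc β₀)) /
          (β₀ * (εb * μ - α * β₀ + α * ξ + wc β₀))))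
    (hWcξ : Wc ξ = 0) :
    HasDerivAt Wc ((2 / ξ) * (εb - εb * μ + α * ξ) * (α - 2 * (μ - 1) * ξ) / (μ - 1)) ξ := by
  have hμ1' : μ - 1 ≠ 0 := sub_ne_zero.2 hμ1
  have hD : εb * (μ - 1) ≠ 0 := mul_ne_zero hεb.ne' hμ1'
  -- the inner variable
  have hsξ : Filter.Tendsto (fun b => α * (ξ - b) / εb) (𝓝[≠] ξ) (𝓝[≠] (0:ℝ)) := by
    rw [tendsto_nhdsWithin_iff]
    constructor
    · have hc : Filter.Tendsto (fun b => α * (ξ - b) / εb) (𝓝 ξ) (𝓝 (α * (ξ - ξ) / εb)) := by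
        apply Continuous.tendsto; continuity
      have := hc.mono_left (nhdsWithin_le_nhds (s := {ξ}ᶜ))
      simpa using this
    · filter_upwards [self_mem_nhdsWithin] with b hb
      have hb' : b ≠ ξ := hb
      have h1 : ξ - b ≠ 0 := sub_ne_zero.2 fun h => hb' h.symm
      simp only [Set.mem_compl_iff, Set.mem_singleton_iff]
      exact div_ne_zero (mul_ne_zero hα.ne' h1) hεb.ne'
  have hwc_eq : ∀ b, wc b = -εb * (α * (ξ - b) / εb * Real.cosh (α * (ξ - b) / εb)
      / Real.sinh (α * (ξ - b) / εb)) := by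
    intro b
    rw [hwc b]
    have h : α * (b - ξ) = -εb * (α * (ξ - b) / εb) := by field_simp; ring
    rw [h]; ring
  have hwct : Filter.Tendsto wc (𝓝[≠] ξ) (𝓝 (-εb)) := by
    have h := (aux_xcoth.comp hsξ).const_mul (-εb)
    rw [show -εb * 1 = -εb by ring] at h
    refine h.congr' ?_
    filter_upwards with b
    rw [hwc_eq b]
    rfl
  -- denominator and numerator limits
  have hdent : Filter.Tendsto (fun b => εb * μ - α * b + α * ξ + wc b) (𝓝[≠] ξ)
      (𝓝 (εb * (μ - 1))) := by
    have hlin : Filter.Tendsto (fun b => εb * μ - α * b + α * ξ) (𝓝[≠] ξ) (𝓝 (εb * μ)) := by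
      have h1 : Filter.Tendsto (fun b : ℝ => εb * μ - α * b + α * ξ) (𝓝 ξ)
          (𝓝 (εb * μ - α * ξ + α * ξ)) := by apply Continuous.tendsto; continuity
      have h2 := h1.mono_left (nhdsWithin_le_nhds (s := {ξ}ᶜ))
      rw [show εb * μ - α * ξ + α * ξ = εb * μ by ring] at h2
      exact h2
    have h3 := hlin.add hwct
    rw [show εb * μ + -εb = εb * (μ - 1) by ring] at h3
    exact h3
  have hnumt : Filter.Tendsto (fun b => b * α + εb * μ - α * ξ + wc b) (𝓝[≠] ξ)
      (𝓝 (εb * (μ - 1))) := by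
    have hlin : Filter.Tendsto (fun b => b * α + εb * μ - α * ξ) (𝓝[≠] ξ) (𝓝 (εb * μ)) := by
      have h1 : Filter.Tendsto (fun b : ℝ => b * α + εb * μ - α * ξ) (𝓝 ξ)
          (𝓝 (ξ * α + εb * μ - α * ξ)) := by apply Continuous.tendsto; continuity
      have h2 := h1.mono_left (nhdsWithin_le_nhds (s := {ξ}ᶜ))
      rw [show ξ * α + εb * μ - α * ξ = εb * μ by ring] at h2
      exact h2
    have h3 := hlin.add hwct
    rw [show εb * μ + -εb = εb * (μ - 1) by ring] at h3
    exact h3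
  have hden_ne : ∀ᶠ b in 𝓝[≠] ξ, εb * μ - α * b + α * ξ + wc b ≠ 0 := hdent.eventually_ne hD
  have hnum_ne : ∀ᶠ b in 𝓝[≠] ξ, b * α + εb * μ - α * ξ + wc b ≠ 0 := hnumt.eventually_ne hD
  -- y tends to 0 within ≠ 0
  have hyt : Filter.Tendsto (fun b => 2 * α * (b - ξ) / (εb * μ - α * b + α * ξ + wc b))
      (𝓝[≠] ξ) (𝓝[≠] (0:ℝ)) := by
    rw [tendsto_nhdsWithin_iff]
    constructor
    · have h1 : Filter.Tendsto (fun b => 2 * α * (b - ξ)) (𝓝[≠] ξ) (𝓝 0) := by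
        have h : Filter.Tendsto (fun b : ℝ => 2 * α * (b - ξ)) (𝓝 ξ) (𝓝 (2 * α * (ξ - ξ))) := by
          apply Continuous.tendsto; continuity
        have := h.mono_left (nhdsWithin_le_nhds (s := {ξ}ᶜ))
        simpa using this
      have := h1.div hdent hD
      simpa [Pi.div_def] using this
    · filter_upwards [hden_ne, self_mem_nhdsWithin] with b hb1 hb2
      have hb' : b ≠ ξ := hb2
      simp only [Set.mem_compl_iff, Set.mem_singleton_iff]
      exact div_ne_zero (mul_ne_zero (mul_ne_zero two_ne_zero hα.ne') (sub_ne_zero.2 hb')) hb1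
  have hlog2 : Filter.Tendsto (fun b => Real.log (1 + 2 * α * (b - ξ) / (εb * μ - α * b + α * ξ + wc b))
      / (2 * α * (b - ξ) / (εb * μ - α * b + α * ξ + wc b))
      * (2 * α / (εb * μ - α * b + α * ξ + wc b))) (𝓝[≠] ξ)
      (𝓝 (1 * (2 * α / (εb * (μ - 1))))) :=
    (aux_log.comp hyt).mul (Filter.Tendsto.div tendsto_const_nhds hdent hD)
  -- the log((2ξ-b)/b)/(b-ξ) term
  have hgt : Filter.Tendsto (fun b => Real.log ((2 * ξ - b) / b) / (b - ξ)) (𝓝[≠] ξ) (𝓝 (-2/ξ)) := by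
    have h1 : HasDerivAt (fun b : ℝ => 2 * ξ - b) (-1) ξ := by
      simpa using (hasDerivAt_id ξ).const_sub (2*ξ)
    have h2 : HasDerivAt (fun b : ℝ => b) 1 ξ := hasDerivAt_id ξ
    have hf := h1.div h2 hξ.ne'
    have hval : (2 * ξ - ξ) / ξ = 1 := by field_simp; ring
    have hg := hf.log (by simp only [Pi.div_apply]; rw [hval]; norm_num)
    have hder : (-1 * ξ - (2 * ξ - ξ) * 1) / ξ ^ 2 / ((2 * ξ - ξ) / ξ) = -2/ξ := by
      rw [hval, div_one]
      rw [show (-1 * ξ - (2 * ξ - ξ) * 1) = -2 * ξ by ring]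
      rw [pow_two]
      rw [mul_div_mul_right _ _ hξ.ne']
    simp only [Pi.div_apply] at hg
    rw [hder] at hg
    rw [hasDerivAt_iff_tendsto_slope] at hg
    refine Filter.Tendsto.congr' ?_ hg
    filter_upwards with b
    rw [slope_def_field, hval, Real.log_one]
    ring
  -- assemble
  rw [hasDerivAt_iff_tendsto_slope]
  have hF : Filter.Tendsto (fun b => 4 * (εb * μ - α * ξ) + 4 * wc b +
      α * εb * (Real.log ((2 * ξ - b) / b) / (b - ξ) +
        Real.log (1 + 2 * α * (b - ξ) / (εb * μ - α * b + α * ξ + wc b))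
          / (2 * α * (b - ξ) / (εb * μ - α * b + α * ξ + wc b))
          * (2 * α / (εb * μ - α * b + α * ξ + wc b))))
      (𝓝[≠] ξ) (𝓝 (4 * (εb * μ - α * ξ) + 4 * (-εb) +
        α * εb * (-2/ξ + 1 * (2 * α / (εb * (μ - 1)))))) :=
    (tendsto_const_nhds.add (hwct.const_mul 4)).add ((hgt.add hlog2).const_mul (α * εb))
  have hEL : (2 / ξ) * (εb - εb * μ + α * ξ) * (α - 2 * (μ - 1) * ξ) / (μ - 1)
      = 4 * (εb * μ - α * ξ) + 4 * (-εb) + α * εb * (-2/ξ + 1 * (2 * α / (εb * (μ - 1)))) := by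
    field_simp
    ring
  rw [hEL]
  refine hF.congr' ?_
  have hIoo : ∀ᶠ b in 𝓝[≠] ξ, b ∈ Set.Ioo (0:ℝ) (2 * ξ) := by
    apply eventually_nhdsWithin_of_eventually_nhds
    exact eventually_mem_set.mpr (Ioo_mem_nhds hξ (by linarith))
  filter_upwards [hden_ne, hnum_ne, self_mem_nhdsWithin, hIoo] with b hdne hnne hb hbI
  have hbξ : b ≠ ξ := hb
  have ht : b - ξ ≠ 0 := sub_ne_zero.2 hbξ
  have ht' : ξ - b ≠ 0 := sub_ne_zero.2 fun h => hbξ h.symm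
  have hb0 : b ≠ 0 := ne_of_gt hbI.1
  have h2ξb : 2 * ξ - b ≠ 0 := sub_ne_zero.2 (ne_of_gt hbI.2)
  have hy0 : 2 * α * (b - ξ) / (εb * μ - α * b + α * ξ + wc b) ≠ 0 :=
    div_ne_zero (mul_ne_zero (mul_ne_zero two_ne_zero hα.ne') ht) hdne
  -- log split
  have hratio : (b * α + εb * μ - α * ξ + wc b) / (εb * μ - α * b + α * ξ + wc b)
      = 1 + 2 * α * (b - ξ) / (εb * μ - α * b + α * ξ + wc b) := by
    rw [div_eq_iff hdne, add_mul, div_mul_cancel₀ _ hdne]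
    ring
  have hsplit : Real.log (((2 * ξ - b) * (b * α + εb * μ - α * ξ + wc b))
        / (b * (εb * μ - α * b + α * ξ + wc b)))
      = Real.log ((2 * ξ - b) / b)
        + Real.log (1 + 2 * α * (b - ξ) / (εb * μ - α * b + α * ξ + wc b)) := by
    rw [show ((2 * ξ - b) * (b * α + εb * μ - α * ξ + wc b))
          / (b * (εb * μ - α * b + α * ξ + wc b))
        = ((2 * ξ - b) / b) * ((b * α + εb * μ - α * ξ + wc b)
          / (εb * μ - α * b + α * ξ + wc b)) from (div_mul_div_comm _ _ _ _).symm]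
    rw [Real.log_mul (div_ne_zero h2ξb hb0) (div_ne_zero hnne hdne), hratio]
  have hylog : Real.log (1 + 2 * α * (b - ξ) / (εb * μ - α * b + α * ξ + wc b))
        / (2 * α * (b - ξ) / (εb * μ - α * b + α * ξ + wc b))
        * (2 * α / (εb * μ - α * b + α * ξ + wc b))
      = Real.log (1 + 2 * α * (b - ξ) / (εb * μ - α * b + α * ξ + wc b)) / (b - ξ) := by
    have gen : ∀ (L D t : ℝ), D ≠ 0 → t ≠ 0 → α ≠ 0 →
        L / (2 * α * t / D) * (2 * α / D) = L / t := by
      intro L D t hD0 ht0 hα0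
      field_simp
    exact gen _ _ _ hdne ht hα.ne'
  rw [slope_def_field, hWcξ, hWc b hbξ, hsplit, hylog]
  field_simp
  ring


/-- The derivative of the continuous extension of W_c at β₀ = ξ equals
(2/ξ)(ε_b - ε_b μ + αξ)(α - 2(μ-1)ξ)/(μ-1). -/
theorem stmt15 (α εb ξ μ : ℝ) (hα : 0 < α) (hεb : 0 < εb) (hξ : 0 < ξ) (hμ : 0 < μ)
    (hμ1 : μ ≠ 1)
    (wc Wc : ℝ → ℝ)
    (hwc : ∀ β₀ : ℝ, wc β₀ = α * (β₀ - ξ) * coth (α * (ξ - β₀) / εb))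
    (hWc : ∀ β₀ : ℝ, β₀ ≠ ξ →
      Wc β₀ = 4 * (β₀ - ξ) * (εb * μ - α * ξ) + 4 * (β₀ - ξ) * wc β₀ +
        α * εb * Real.log (((2 * ξ - β₀) * (β₀ * α + εb * μ - α * ξ + wc β₀)) /
          (β₀ * (εb * μ - α * β₀ + α * ξ + wc β₀))))
    (hWcξ : Wc ξ = 0) :
    HasDerivAt Wc ((2 / ξ) * (εb - εb * μ + α * ξ) * (α - 2 * (μ - 1) * ξ) / (μ - 1)) ξ := by
  refine stmt15_aux α εb ξ μ hα hεb hξ hμ hμ1 wc Wc (fun β₀ => ?_) hWc hWcξ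
  rw [hwc β₀, coth]
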